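/- Let 𝒮 be a metric space and P a Markov transition kernel on 𝒮 with the strong Feller property. Let μ₁ and μ₂ be invariant probability measures that are mutually singular, i.e., there exists a Borel set A with μ₁(A) = 1 and μ₂(A) = 0. Then their topological supports are disjoint: supp(μ₁) ∩ supp(μ₂) = ∅. -/

import Mathlib

open MeasureTheory ENNReal

/-- The topological support of a measure: the set of points all of whose open
neighbourhoods have positive measure (equivalently, the smallest closed set of full
measure). -/
def measureSupport {S : Type*} [TopologicalSpace S] [MeasurableSpace S]
    (μ : Measure S) : Set S :=
  {x | ∀ U : Set S, IsOpen U → x ∈ U → 0 < μ U}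

/-- A continuous function equal a.e. to a constant equals that constant on the support. -/
lemma aux_const_on_support {S : Type*} [TopologicalSpace S] [MeasurableSpace S]
    {μ : Measure S} {g : S → ℝ} (hg : Continuous g) (c : ℝ)
    (hae : ∀ᵐ s ∂μ, g s = c) {x : S} (hx : x ∈ measureSupport μ) : g x = c := by
  by_contra h
  have hU : IsOpen (g ⁻¹' {c}ᶜ) := (isOpen_compl_singleton).preimage hg
  have hpos := hx _ hU h
  have : μ (g ⁻¹' {c}ᶜ) = 0 := by
    have := MeasureTheory.ae_iff.mp hae
    simpa [Set.preimage, Set.mem_compl_iff] using this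
  rw [Set.preimage_compl] at this
  simp [this] at hpos

/-- for a strong Feller Markov kernel `P` on a metric space, if `μ₁` and
`μ₂` are invariant probability measures that are mutually singular (there is a Borel set
`A` with `μ₁(A) = 1` and `μ₂(A) = 0`), then their topological supports are disjoint. -/
theorem stmt_13
    {S : Type*} [MetricSpace S] [MeasurableSpace S] [BorelSpace S]
    (P : S → Measure S) (hP : Measurable P) [∀ s, IsProbabilityMeasure (P s)]
    (hSF : ∀ f : S → ℝ, Measurable f → (∃ M, ∀ x, |f x| ≤ M) →
      Continuous fun s => ∫ x, f x ∂(P s))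
    (μ₁ μ₂ : Measure S) [IsProbabilityMeasure μ₁] [IsProbabilityMeasure μ₂]
    (hμ₁ : ∀ A : Set S, MeasurableSet A → μ₁ A = ∫⁻ s, P s A ∂μ₁)
    (hμ₂ : ∀ A : Set S, MeasurableSet A → μ₂ A = ∫⁻ s, P s A ∂μ₂)
    (A : Set S) (hA : MeasurableSet A) (hA₁ : μ₁ A = 1) (hA₂ : μ₂ A = 0) :
    measureSupport μ₁ ∩ measureSupport μ₂ = ∅ := by
  -- the function s ↦ P s A, real-valued
  set g : S → ℝ := fun s => ((P s A).toReal) with hg_def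
  have hmeas : Measurable fun s => P s A := (Measure.measurable_coe hA).comp hP
  have hle1 : ∀ s, P s A ≤ 1 := fun s => prob_le_one
  -- g is continuous by strong Feller
  have hgcont : Continuous g := by
    have hf : Measurable (A.indicator (fun _ => (1:ℝ))) :=
      measurable_const.indicator hA
    have hbd : ∃ M, ∀ x, |A.indicator (fun _ => (1:ℝ)) x| ≤ M := by
      refine ⟨1, fun x => ?_⟩
      by_cases hx : x ∈ A <;> simp [Set.indicator, hx]
    have := hSF _ hf hbd
    convert this using 2 with s
    rw [hg_def]
    simp only
    rw [MeasureTheory.integral_indicator_const _ hA]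
    simp
    rfl
  -- P s A = 1 μ₁-a.e.
  have h1 : ∀ᵐ s ∂μ₁, P s A = 1 := by
    have hint : ∫⁻ s, P s A ∂μ₁ = 1 := (hμ₁ A hA).symm.trans hA₁
    have hsub : ∫⁻ s, (1 - P s A) ∂μ₁ = 0 := by
      rw [lintegral_sub hmeas (by simp [hint]) (Filter.Eventually.of_forall hle1)]
      simp [hint]
    have := (lintegral_eq_zero_iff (measurable_const.sub hmeas)).mp hsub
    filter_upwards [this] with s hs
    have : (1 : ℝ≥0∞) ≤ P s A := tsub_eq_zero_iff_le.mp hs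
    exact le_antisymm (hle1 s) this
  -- P s A = 0 μ₂-a.e.
  have h2 : ∀ᵐ s ∂μ₂, P s A = 0 := by
    have hint : ∫⁻ s, P s A ∂μ₂ = 0 := (hμ₂ A hA).symm.trans hA₂
    exact (lintegral_eq_zero_iff hmeas).mp hint
  -- so g = 1 a.e. μ₁ and g = 0 a.e. μ₂
  have hg1 : ∀ᵐ s ∂μ₁, g s = 1 := by filter_upwards [h1] with s hs; simp [hg_def, hs]
  have hg2 : ∀ᵐ s ∂μ₂, g s = 0 := by filter_upwards [h2] with s hs; simp [hg_def, hs]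
  ext x
  simp only [Set.mem_inter_iff, Set.mem_empty_iff_false, iff_false]
  rintro ⟨hx1, hx2⟩
  have e1 : g x = 1 := aux_const_on_support hgcont 1 hg1 hx1
  have e2 : g x = 0 := aux_const_on_support hgcont 0 hg2 hx2
  rw [e1] at e2
  norm_num at e2
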